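/- Let μ be a probability measure on [0,∞) with ∫₀^∞ x dμ(x) < ∞, let B_V > 0, C_V ≥ 0, K ≥ √C_V, s > 0, and let γ be the standard Gaussian measure N(0, s) on ℝ. Set A(u) := (√|B_V u + C_V| − K)·1_{u > (K²−C_V)/B_V} for u ∈ ℝ. Then lim_{ε→0⁺} ∫₀^∞ ∫_ℝ A(x + εy) dγ(y) dμ(x) = ∫₀^∞ (√(B_V x + C_V) − K)⁺ dμ(x). -/
import Mathlib


open MeasureTheory Real Set Filter

/-- Extended VIX call payoff on `ℝ`: `A(u) = (√|B u + C| − K)·1_{u > (K²−C)/B}`. -/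
noncomputable def payoffExt (B C K : ℝ) (u : ℝ) : ℝ :=
  if (K ^ 2 - C) / B < u then Real.sqrt |B * u + C| - K else 0


lemma sqrt_le_one_add (t : ℝ) (ht : 0 ≤ t) : Real.sqrt t ≤ 1 + t := by
  nlinarith [Real.sq_sqrt ht, Real.sqrt_nonneg t]

lemma payoff_abs_le (B C K : ℝ) (hB : 0 < B) (hC : 0 ≤ C) (hK : 0 ≤ K) (u : ℝ) :
    |payoffExt B C K u| ≤ 1 + B * |u| + C + K := by
  unfold payoffExt
  split_ifs with h
  · have h1 : Real.sqrt (|B * u + C|) ≤ 1 + |B * u + C| :=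
      sqrt_le_one_add _ (abs_nonneg _)
    have h2 : |B * u + C| ≤ B * |u| + C := by
      calc |B * u + C| ≤ |B * u| + |C| := abs_add_le _ _
      _ = B * |u| + C := by rw [abs_mul, abs_of_pos hB, abs_of_nonneg hC]
    have h0 : 0 ≤ Real.sqrt (|B * u + C|) := Real.sqrt_nonneg _
    have h3 : |Real.sqrt (|B * u + C|) - K| ≤ Real.sqrt (|B * u + C|) + K :=
      abs_le.mpr ⟨by linarith, by linarith⟩
    linarith
  · simp only [abs_zero]
    positivity

lemma payoff_continuous (B C K : ℝ) (hB : 0 < B) (hC : 0 ≤ C) (hK : Real.sqrt C ≤ K) :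
    Continuous (payoffExt B C K) := by
  have hK0 : 0 ≤ K := le_trans (Real.sqrt_nonneg C) hK
  have hg : Continuous fun u : ℝ => Real.sqrt (|B * u + C|) - K := by
    fun_prop
  rw [continuous_iff_continuousAt]
  intro u
  rcases lt_trichotomy ((K ^ 2 - C) / B) u with h | h | h
  · have : payoffExt B C K =ᶠ[nhds u] fun u => Real.sqrt (|B * u + C|) - K := by
      filter_upwards [Ioi_mem_nhds h] with v hv
      exact if_pos (mem_Ioi.mp hv)
    exact (hg.continuousAt).congr this.symm
  · subst h
    have hval : payoffExt B C K ((K ^ 2 - C) / B) = 0 := by simp [payoffExt]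
    rw [ContinuousAt, hval]
    have hgval : Real.sqrt (|B * ((K ^ 2 - C) / B) + C|) - K = 0 := by
      rw [mul_div_cancel₀ _ hB.ne']
      simp [Real.sqrt_sq_eq_abs, abs_of_nonneg hK0]
    have hgt : Tendsto (fun v => |Real.sqrt (|B * v + C|) - K|)
        (nhds ((K ^ 2 - C) / B)) (nhds 0) := by
      have := (hg.abs.tendsto ((K ^ 2 - C) / B))
      rwa [hgval, abs_zero] at this
    refine squeeze_zero_norm (fun v => ?_) hgt
    unfold payoffExt
    split_ifs
    · exact le_refl _
    · simp [abs_nonneg]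
  · have : payoffExt B C K =ᶠ[nhds u] fun _ => (0 : ℝ) := by
      filter_upwards [Iio_mem_nhds h] with v hv
      exact if_neg (not_lt.mpr (le_of_lt (mem_Iio.mp hv)))
    exact (continuousAt_const).congr this.symm

lemma payoff_eq_max (B C K : ℝ) (hB : 0 < B) (hC : 0 ≤ C) (hK : Real.sqrt C ≤ K)
    (x : ℝ) (hx : 0 ≤ x) :
    payoffExt B C K x = max (Real.sqrt (B * x + C) - K) 0 := by
  have hK0 : 0 ≤ K := le_trans (Real.sqrt_nonneg C) hK
  have hBx : 0 ≤ B * x + C := by positivity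
  unfold payoffExt
  rw [abs_of_nonneg hBx]
  split_ifs with h
  · have h1 : K ^ 2 < B * x + C := by
      rw [div_lt_iff₀ hB] at h; linarith
    have h2 : K < Real.sqrt (B * x + C) := by
      have := Real.sqrt_lt_sqrt (by positivity) h1
      rwa [Real.sqrt_sq hK0] at this
    rw [max_eq_left (by linarith)]
  · have h1 : B * x + C ≤ K ^ 2 := by
      rw [not_lt] at h; nlinarith [(le_div_iff₀ hB).mp h]
    have h2 : Real.sqrt (B * x + C) ≤ K := by
      have := Real.sqrt_le_sqrt h1
      rwa [Real.sqrt_sq hK0] at this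
    rw [max_eq_right (by linarith)]

lemma integrable_abs_gaussian (v : NNReal) (hv : v ≠ 0) :
    Integrable (fun y : ℝ => |y|) (ProbabilityTheory.gaussianReal 0 v) := by
  rw [ProbabilityTheory.gaussianReal_of_var_ne_zero _ hv,
    integrable_withDensity_iff (ProbabilityTheory.measurable_gaussianPDF _ _)
      (Filter.Eventually.of_forall fun _ => ENNReal.ofReal_lt_top)]
  simp only [ProbabilityTheory.gaussianPDF, ENNReal.toReal_ofReal
    (ProbabilityTheory.gaussianPDFReal_nonneg _ _ _)]
  unfold ProbabilityTheory.gaussianPDFReal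
  have hv' : (0 : ℝ) < (v : ℝ) := by positivity
  have hb : (0 : ℝ) < (2 * (v : ℝ))⁻¹ := by positivity
  have H := (integrable_mul_exp_neg_mul_sq hb).abs.const_mul (√(2 * π * (v : ℝ)))⁻¹
  refine H.congr (Filter.Eventually.of_forall fun y => ?_)
  simp only [sub_zero]
  rw [abs_mul, abs_of_pos (Real.exp_pos _)]
  have hexp : -(2 * (v : ℝ))⁻¹ * y ^ 2 = -y ^ 2 / (2 * (v : ℝ)) := by
    field_simp
  rw [hexp]
  ring

/-- Convergence of the Gaussian-smoothed price to the true price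
(`lim_{ε→0} P_t^{(ε)} = P_t`): for a probability measure `μ` on `[0,∞)` with
finite mean and `γ = N(0,s)`,
`lim_{ε→0⁺} ∫₀^∞ ∫_ℝ A(x+εy) dγ(y) dμ(x) = ∫₀^∞ (√(B x + C) − K)⁺ dμ(x)`. -/
theorem stmt18 (μ : MeasureTheory.Measure ℝ) [IsProbabilityMeasure μ]
    (hsupp : μ (Set.Iio 0) = 0)
    (hmean : MeasureTheory.Integrable (fun x : ℝ => x) μ)
    (B C K : ℝ) (hB : 0 < B) (hC : 0 ≤ C) (hK : Real.sqrt C ≤ K)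
    (s : ℝ) (hs : 0 < s) :
    Filter.Tendsto
      (fun ε : ℝ => ∫ x, ∫ y, payoffExt B C K (x + ε * y)
        ∂(ProbabilityTheory.gaussianReal 0 s.toNNReal) ∂μ)
      (nhdsWithin 0 (Set.Ioi 0))
      (nhds (∫ x, max (Real.sqrt (B * x + C) - K) 0 ∂μ)) := by
  have hK0 : 0 ≤ K := le_trans (Real.sqrt_nonneg C) hK
  set γ := ProbabilityTheory.gaussianReal 0 s.toNNReal with hγ
  have hv : s.toNNReal ≠ 0 := by
    simp only [ne_eq, Real.toNNReal_eq_zero, not_le]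
    exact hs
  have Mint : Integrable (fun y : ℝ => |y|) γ := integrable_abs_gaussian _ hv
  set M := ∫ y, |y| ∂γ with hM
  have hM0 : 0 ≤ M := integral_nonneg fun y => abs_nonneg y
  have contA : Continuous (payoffExt B C K) := payoff_continuous B C K hB hC hK
  have hae : ∀ᵐ x ∂μ, 0 ≤ x := by
    rw [ae_iff]
    convert hsupp using 2
    ext x
    simp [not_le]
  have hIoc : Ioc (0 : ℝ) 1 ∈ nhdsWithin (0 : ℝ) (Ioi 0) :=
    Ioc_mem_nhdsGT_of_mem ⟨le_refl 0, one_pos⟩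
  -- integral of the gaussian bound
  have hgauss_int : ∀ c : ℝ, Integrable (fun y : ℝ => c + B * |y|) γ :=
    fun c => (integrable_const c).add (Mint.const_mul B)
  have hgauss_eval : ∀ c : ℝ, ∫ y, (c + B * |y|) ∂γ = c + B * M := by
    intro c
    rw [integral_add (integrable_const c) (Mint.const_mul B), integral_const,
      integral_const_mul]
    simp [hM]
  -- inner convergence
  have inner : ∀ x : ℝ, 0 ≤ x →
      Tendsto (fun ε : ℝ => ∫ y, payoffExt B C K (x + ε * y) ∂γ)
        (nhdsWithin 0 (Ioi 0)) (nhds (max (Real.sqrt (B * x + C) - K) 0)) := by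
    intro x hx
    rw [← payoff_eq_max B C K hB hC hK x hx]
    have key : Tendsto (fun ε : ℝ => ∫ y, payoffExt B C K (x + ε * y) ∂γ)
        (nhdsWithin 0 (Ioi 0)) (nhds (∫ _, payoffExt B C K x ∂γ)) := by
      apply tendsto_integral_filter_of_dominated_convergence
        (fun y => (1 + B * x + C + K) + B * |y|)
      · exact Eventually.of_forall fun ε =>
          (contA.comp (continuous_const.add (continuous_const.mul continuous_id))).aestronglyMeasurable
      · filter_upwards [hIoc] with ε hε
        refine Eventually.of_forall fun y => ?_
        rw [Real.norm_eq_abs]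
        refine le_trans (payoff_abs_le B C K hB hC hK0 _) ?_
        have h1 : |x + ε * y| ≤ x + |y| := by
          calc |x + ε * y| ≤ |x| + |ε * y| := abs_add_le _ _
          _ = x + ε * |y| := by
              rw [abs_of_nonneg hx, abs_mul, abs_of_pos hε.1]
          _ ≤ x + |y| := by nlinarith [abs_nonneg y, hε.2]
        nlinarith
      · exact hgauss_int _
      · refine Eventually.of_forall fun y => ?_
        have h2 : Tendsto (fun ε : ℝ => x + ε * y) (nhdsWithin 0 (Ioi 0)) (nhds x) := by
          have hc : Continuous fun ε : ℝ => x + ε * y := by fun_prop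
          have := hc.tendsto 0
          simp only [zero_mul, add_zero] at this
          exact this.mono_left nhdsWithin_le_nhds
        exact (contA.tendsto x).comp h2
    simpa [integral_const] using key
  -- outer convergence
  apply tendsto_integral_filter_of_dominated_convergence
    (fun x => (1 + C + K + B * M) + B * |x|)
  · refine Eventually.of_forall fun ε => ?_
    have : StronglyMeasurable fun x : ℝ => ∫ y, payoffExt B C K (x + ε * y) ∂γ := by
      apply MeasureTheory.StronglyMeasurable.integral_prod_right'
        (f := fun p : ℝ × ℝ => payoffExt B C K (p.1 + ε * p.2))
      exact (contA.comp (continuous_fst.add (continuous_const.mul continuous_snd))).stronglyMeasurable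
    exact this.aestronglyMeasurable
  · filter_upwards [hIoc] with ε hε
    filter_upwards [hae] with x hx
    rw [Real.norm_eq_abs]
    have step1 : |∫ y, payoffExt B C K (x + ε * y) ∂γ|
        ≤ ∫ y, |payoffExt B C K (x + ε * y)| ∂γ := by
      simpa [Real.norm_eq_abs] using
        norm_integral_le_integral_norm (μ := γ) fun y => payoffExt B C K (x + ε * y)
    refine le_trans step1 ?_
    have step2 : ∫ y, |payoffExt B C K (x + ε * y)| ∂γ
        ≤ ∫ y, ((1 + B * x + C + K) + B * |y|) ∂γ := by
      refine integral_mono_of_nonneg (Eventually.of_forall fun y => abs_nonneg _)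
        (hgauss_int _) (Eventually.of_forall fun y => ?_)
      show |payoffExt B C K (x + ε * y)| ≤ (1 + B * x + C + K) + B * |y|
      refine le_trans (payoff_abs_le B C K hB hC hK0 _) ?_
      have h1 : |x + ε * y| ≤ x + |y| := by
        calc |x + ε * y| ≤ |x| + |ε * y| := abs_add_le _ _
        _ = x + ε * |y| := by
            rw [abs_of_nonneg hx, abs_mul, abs_of_pos hε.1]
        _ ≤ x + |y| := by nlinarith [abs_nonneg y, hε.2]
      nlinarith
    refine le_trans step2 ?_
    rw [hgauss_eval, abs_of_nonneg hx]
    linarith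
  · exact ((integrable_const _).add (hmean.abs.const_mul B))
  · filter_upwards [hae] with x hx
    exact inner x hx
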